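/- Under hypotheses H(A), H(J), H(γ,f) and (H_s), there exists a constant c > 0, independent of the choice of subspace, such that for every finite-dimensional subspace V^h ⊆ V the unique solution u^h ∈ V^h of the discrete problem P_opt^h satisfies ‖u^h‖_V ≤ c(1 + ‖f‖_{V*}), and consequently ‖γu^h‖_X ≤ c_γ c(1 + ‖f‖_{V*}). -/

import Mathlib

open Filter Topology

/-- Clarke generalized directional derivative of `j` at `x` in direction `v`. -/
noncomputable def clarkeDeriv {Y : Type*} [NormedAddCommGroup Y] [NormedSpace ℝ Y]
    (j : Y → ℝ) (x v : Y) : ℝ :=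
  Filter.limsup (fun p : Y × ℝ => (j (p.1 + p.2 • v) - j p.1) / p.2)
    ((nhds x) ×ˢ (nhdsWithin (0 : ℝ) (Set.Ioi (0 : ℝ))))

/-- Clarke generalized subdifferential of `j` at `x`. -/
noncomputable def clarkeSubdiff {Y : Type*} [NormedAddCommGroup Y] [NormedSpace ℝ Y]
    (j : Y → ℝ) (x : Y) : Set (Y →L[ℝ] ℝ) :=
  {ξ : Y →L[ℝ] ℝ | ∀ v : Y, ξ v ≤ clarkeDeriv j x v}

set_option linter.unusedSectionVars false

section helpers

variable {Y : Type*} [NormedAddCommGroup Y] [NormedSpace ℝ Y]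
variable {Z : Type*} [NormedAddCommGroup Z] [NormedSpace ℝ Z]

/-- difference quotient -/
noncomputable def dq (j : Y → ℝ) (v : Y) : Y × ℝ → ℝ :=
  fun p => (j (p.1 + p.2 • v) - j p.1) / p.2

/-- the filter -/
def FF (x : Y) : Filter (Y × ℝ) := (nhds x) ×ˢ (nhdsWithin (0 : ℝ) (Set.Ioi (0 : ℝ)))

lemma clarkeDeriv_eq (j : Y → ℝ) (x v : Y) : clarkeDeriv j x v = limsup (dq j v) (FF x) := rfl

instance FF_neBot (x : Y) : (FF x).NeBot := by
  unfold FF; infer_instance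

lemma eventually_pos_FF (x : Y) : ∀ᶠ p in FF x, 0 < p.2 :=
  tendsto_snd.eventually eventually_mem_nhdsWithin

lemma dq_event_bound (j : Y → ℝ) (hj : LocallyLipschitz j) (x : Y) :
    ∃ K : ℝ, 0 ≤ K ∧ ∀ v : Y, ∀ᶠ p in FF x, |dq j v p| ≤ K * ‖v‖ := by
  obtain ⟨K, t, ht, hlip⟩ := hj x
  obtain ⟨ε, hε, hball⟩ := Metric.mem_nhds_iff.mp ht
  refine ⟨K, K.coe_nonneg, fun v => ?_⟩
  have h1 : ∀ᶠ p in FF x, p.1 ∈ Metric.ball x (ε / 2) :=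
    tendsto_fst.eventually (Metric.ball_mem_nhds x (by linarith) : _)
  have hr : 0 < (ε / 2) / (‖v‖ + 1) := by positivity
  have h2 : ∀ᶠ p in FF x, p.2 ∈ Set.Ioo 0 ((ε / 2) / (‖v‖ + 1)) :=
    tendsto_snd.eventually (Ioo_mem_nhdsGT_of_mem ⟨le_refl _, hr⟩)
  filter_upwards [h1, h2] with p hp1 hp2
  have hvpos : (0:ℝ) < ‖v‖ + 1 := by positivity
  have hp2pos : 0 < p.2 := hp2.1
  have hsm : p.2 * ‖v‖ < ε / 2 := by
    have := (lt_div_iff₀ hvpos).mp hp2.2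
    nlinarith [norm_nonneg v]
  have hmem1 : p.1 ∈ t := hball (by
    apply Metric.ball_subset_ball (by linarith : ε / 2 ≤ ε); exact hp1)
  have hmem2 : p.1 + p.2 • v ∈ t := by
    apply hball
    rw [Metric.mem_ball, dist_eq_norm]
    have : p.1 + p.2 • v - x = (p.1 - x) + p.2 • v := by abel
    rw [this]
    calc ‖(p.1 - x) + p.2 • v‖ ≤ ‖p.1 - x‖ + ‖p.2 • v‖ := norm_add_le _ _
    _ < ε / 2 + ε / 2 := by
        apply add_lt_add
        · rw [← dist_eq_norm]; exact hp1
        · rw [norm_smul, Real.norm_eq_abs, abs_of_pos hp2pos]; exact hsm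
    _ = ε := by ring
  have hd : |j (p.1 + p.2 • v) - j p.1| ≤ K * (p.2 * ‖v‖) := by
    have := hlip.dist_le_mul _ hmem2 _ hmem1
    rw [Real.dist_eq, dist_eq_norm, add_sub_cancel_left, norm_smul, Real.norm_eq_abs,
      abs_of_pos hp2pos] at this
    exact this
  rw [dq, abs_div, abs_of_pos hp2pos, div_le_iff₀ hp2pos]
  calc |j (p.1 + p.2 • v) - j p.1| ≤ K * (p.2 * ‖v‖) := hd
  _ = K * ‖v‖ * p.2 := by ring


set_option linter.unusedSectionVars false

lemma bounds_of_event {α : Type*} (F : Filter α) [F.NeBot] (u : α → ℝ) (b : ℝ)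
    (h : ∀ᶠ p in F, |u p| ≤ b) :
    IsBoundedUnder (· ≤ ·) F u ∧ IsBoundedUnder (· ≥ ·) F u ∧
      IsCoboundedUnder (· ≤ ·) F u ∧ IsCoboundedUnder (· ≥ ·) F u := by
  have h1 : IsBoundedUnder (· ≤ ·) F u := ⟨b, h.mono fun p hp => (abs_le.mp hp).2⟩
  have h2 : IsBoundedUnder (· ≥ ·) F u := ⟨-b, h.mono fun p hp => (abs_le.mp hp).1⟩
  exact ⟨h1, h2, h2.isCoboundedUnder_le, h1.isCoboundedUnder_ge⟩

lemma limsup_comp_map {α β : Type*} (u : β → ℝ) (m : α → β) (f : Filter α) :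
    limsup (u ∘ m) f = limsup u (Filter.map m f) := by
  simp only [Filter.limsup, Filter.map_map]

/-- composition with a map into the filter -/
lemma limsup_dq_comp_le (j : Z → ℝ) (hj : LocallyLipschitz j)
    (x : Y) (xz : Z) (m : Y × ℝ → Z × ℝ) (hm : Tendsto m (FF x) (FF xz)) (v : Z) :
    (IsBoundedUnder (· ≤ ·) (FF x) (dq j v ∘ m) ∧ IsBoundedUnder (· ≥ ·) (FF x) (dq j v ∘ m) ∧
      IsCoboundedUnder (· ≤ ·) (FF x) (dq j v ∘ m)) ∧
    limsup (dq j v ∘ m) (FF x) ≤ clarkeDeriv j xz v := by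
  obtain ⟨K, hK0, hK⟩ := dq_event_bound j hj xz
  have hb := hK v
  have hbx : ∀ᶠ p in FF x, |(dq j v ∘ m) p| ≤ K * ‖v‖ := hm.eventually hb
  obtain ⟨b1, b2, b3, b4⟩ := bounds_of_event (FF x) (dq j v ∘ m) (K * ‖v‖) hbx
  refine ⟨⟨b1, b2, b3⟩, ?_⟩
  rw [limsup_comp_map, clarkeDeriv_eq]
  haveI : (Filter.map m (FF x)).NeBot := Filter.map_neBot
  exact limsup_le_limsup_of_le hm
    (bounds_of_event (Filter.map m (FF x)) (dq j v) (K * ‖v‖)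
      (Filter.eventually_map.mpr hbx)).2.2.1
    (bounds_of_event (FF xz) (dq j v) (K * ‖v‖) hb).1

lemma tendsto_shift (x u : Y) :
    Tendsto (fun p : Y × ℝ => (p.1 + p.2 • u, p.2)) (FF x) (FF x) := by
  unfold FF
  apply Filter.Tendsto.prodMk
  · have ha : Tendsto (fun p : Y × ℝ => p.1) (FF x) (𝓝 x) := tendsto_fst
    have hb : Tendsto (fun p : Y × ℝ => p.2) (FF x) (𝓝 (0:ℝ)) :=
      tendsto_snd.mono_right nhdsWithin_le_nhds
    simpa [FF] using ha.add (hb.smul_const u)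
  · exact tendsto_snd

lemma clarkeDeriv_add_le (j : Y → ℝ) (hj : LocallyLipschitz j) (x u v : Y) :
    clarkeDeriv j x (u + v) ≤ clarkeDeriv j x u + clarkeDeriv j x v := by
  obtain ⟨K, hK0, hK⟩ := dq_event_bound j hj x
  obtain ⟨b1, b2, b3, b4⟩ := bounds_of_event (FF x) (dq j u) (K * ‖u‖) (hK u)
  set m : Y × ℝ → Y × ℝ := fun p => (p.1 + p.2 • u, p.2) with hmdef
  have hmt : Tendsto m (FF x) (FF x) := tendsto_shift x u
  obtain ⟨⟨c1, c2, c3⟩, hcomp⟩ := limsup_dq_comp_le j hj x x m hmt v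
  have hsplit : dq j (u + v) = dq j u + dq j v ∘ m := by
    funext p
    simp only [Pi.add_apply, Function.comp_apply, dq, hmdef]
    have h1 : p.1 + p.2 • (u + v) = p.1 + p.2 • u + p.2 • v := by
      rw [smul_add]; abel
    rw [h1, ← add_div]
    congr 1
    ring
  calc clarkeDeriv j x (u + v) = limsup (dq j u + dq j v ∘ m) (FF x) := by
        rw [clarkeDeriv_eq, hsplit]
  _ ≤ limsup (dq j u) (FF x) + limsup (dq j v ∘ m) (FF x) := limsup_add_le b2 b1 c3 c1
  _ ≤ clarkeDeriv j x u + clarkeDeriv j x v := by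
      rw [clarkeDeriv_eq]
      exact add_le_add le_rfl hcomp

lemma clarkeDeriv_zero_dir (j : Y → ℝ) (x : Y) : clarkeDeriv j x 0 = 0 := by
  have h : dq j (0 : Y) = fun _ => (0:ℝ) := by
    funext p; simp [dq]
  rw [clarkeDeriv_eq, h, limsup_const]

lemma clarkeDeriv_le_bound (j : Y → ℝ) (x v : Y) (K : ℝ)
    (h : ∀ᶠ p in FF x, |dq j v p| ≤ K) : clarkeDeriv j x v ≤ K := by
  obtain ⟨b1, b2, b3, b4⟩ := bounds_of_event (FF x) (dq j v) K h
  rw [clarkeDeriv_eq]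
  exact limsup_le_of_le b3 (h.mono fun p hp => (abs_le.mp hp).2)

lemma neg_bound_le_clarkeDeriv (j : Y → ℝ) (x v : Y) (K : ℝ)
    (h : ∀ᶠ p in FF x, |dq j v p| ≤ K) : -K ≤ clarkeDeriv j x v := by
  obtain ⟨b1, b2, b3, b4⟩ := bounds_of_event (FF x) (dq j v) K h
  rw [clarkeDeriv_eq]
  exact le_limsup_of_frequently_le ((h.mono fun p hp => (abs_le.mp hp).1).frequently) b1

lemma tendsto_mul_left_Ioi {c : ℝ} (hc : 0 < c) :
    Tendsto (fun t => c * t) (𝓝[>] (0:ℝ)) (𝓝[>] (0:ℝ)) := by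
  apply tendsto_nhdsWithin_of_tendsto_nhds_of_eventually_within
  · have h1 : Tendsto (fun t : ℝ => c * t) (𝓝 (0:ℝ)) (𝓝 (c * 0)) :=
      (continuous_const.mul continuous_id).tendsto (0:ℝ)
    rw [mul_zero] at h1
    exact h1.mono_left nhdsWithin_le_nhds
  · filter_upwards [self_mem_nhdsWithin] with t ht
    exact mul_pos hc ht

lemma map_scale_FF (x : Y) {c : ℝ} (hc : 0 < c) :
    Filter.map (fun p : Y × ℝ => (p.1, c * p.2)) (FF x) = FF x := by
  apply le_antisymm
  · exact tendsto_fst.prodMk ((tendsto_mul_left_Ioi hc).comp tendsto_snd)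
  · have h1 : Tendsto (fun p : Y × ℝ => (p.1, c⁻¹ * p.2)) (FF x) (FF x) :=
      tendsto_fst.prodMk ((tendsto_mul_left_Ioi (inv_pos.mpr hc)).comp tendsto_snd)
    have h2 : FF x = Filter.map (fun p : Y × ℝ => (p.1, c * p.2))
        (Filter.map (fun p : Y × ℝ => (p.1, c⁻¹ * p.2)) (FF x)) := by
      rw [Filter.map_map]
      have : ((fun p : Y × ℝ => (p.1, c * p.2)) ∘ fun p : Y × ℝ => (p.1, c⁻¹ * p.2)) = id := by
        funext p
        simp [Function.comp, mul_inv_cancel_left₀ hc.ne']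
      rw [this, Filter.map_id]
    nth_rewrite 1 [h2]
    exact Filter.map_mono h1

lemma clarkeDeriv_pos_smul (j : Y → ℝ) (hj : LocallyLipschitz j) (x v : Y) {c : ℝ}
    (hc : 0 < c) : clarkeDeriv j x (c • v) = c * clarkeDeriv j x v := by
  obtain ⟨K, hK0, hK⟩ := dq_event_bound j hj x
  set m : Y × ℝ → Y × ℝ := fun p => (p.1, c * p.2) with hmdef
  have hmt : Tendsto m (FF x) (FF x) := by
    rw [Filter.tendsto_iff_comap, ← Filter.map_le_iff_le_comap, map_scale_FF x hc]
  have hsplit : dq j (c • v) = fun p => c * (dq j v ∘ m) p := by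
    funext p
    simp only [Function.comp_apply, dq, hmdef]
    rw [mul_div_assoc', mul_div_mul_left _ _ hc.ne']
    congr 3
    rw [mul_comm, mul_smul]
  have hbx : ∀ᶠ p in FF x, |(dq j v ∘ m) p| ≤ K * ‖v‖ := hmt.eventually (hK v)
  obtain ⟨b1, b2, b3, b4⟩ := bounds_of_event (FF x) (dq j v ∘ m) (K * ‖v‖) hbx
  have hbc : ∀ᶠ p in FF x, |c * (dq j v ∘ m) p| ≤ c * (K * ‖v‖) := by
    filter_upwards [hbx] with p hp
    rw [abs_mul, abs_of_pos hc]
    exact mul_le_mul_of_nonneg_left hp hc.le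
  obtain ⟨d1, d2, d3, d4⟩ := bounds_of_event (FF x) (fun p => c * (dq j v ∘ m) p)
    (c * (K * ‖v‖)) hbc
  have horder : (OrderIso.mulLeft₀ c hc) (limsup (dq j v ∘ m) (FF x))
      = limsup (fun p => (OrderIso.mulLeft₀ c hc) ((dq j v ∘ m) p)) (FF x) :=
    OrderIso.limsup_apply _ b1 b3 (by simpa [OrderIso.mulLeft₀_apply] using d1)
      (by simpa [OrderIso.mulLeft₀_apply] using d3)
  simp only [OrderIso.mulLeft₀_apply] at horder
  rw [clarkeDeriv_eq, hsplit, ← horder, limsup_comp_map, map_scale_FF x hc, ← clarkeDeriv_eq]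

lemma clarkeSubdiff_nonempty (j : Y → ℝ) (hj : LocallyLipschitz j) (x : Y) :
    ∃ ξ : Y →L[ℝ] ℝ, ξ ∈ clarkeSubdiff j x := by
  obtain ⟨K, hK0, hK⟩ := dq_event_bound j hj x
  obtain ⟨g, -, hg⟩ := exists_extension_of_le_sublinear ⟨⊥, 0⟩ (fun v => clarkeDeriv j x v)
    (fun c hc v => clarkeDeriv_pos_smul j hj x v hc)
    (fun u v => clarkeDeriv_add_le j hj x u v)
    (fun v => by
      have hv0 : (v : Y) = 0 := Submodule.mem_bot ℝ |>.mp v.2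
      simp [hv0, clarkeDeriv_zero_dir])
  have hbound : ∀ v : Y, ‖g v‖ ≤ K * ‖v‖ := by
    intro v
    rw [Real.norm_eq_abs, abs_le]
    constructor
    · have h1 : g (-v) ≤ clarkeDeriv j x (-v) := hg (-v)
      have h2 : clarkeDeriv j x (-v) ≤ K * ‖-v‖ :=
        clarkeDeriv_le_bound j x (-v) (K * ‖-v‖) (hK (-v))
      rw [norm_neg] at h2
      rw [map_neg] at h1
      linarith
    · exact (hg v).trans (clarkeDeriv_le_bound j x v (K * ‖v‖) (hK v))
  refine ⟨LinearMap.mkContinuous g K hbound, fun v => ?_⟩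
  simpa using hg v

end helpers

section potential

variable {V : Type*} [NormedAddCommGroup V] [NormedSpace ℝ V]

lemma hasDerivAt_line (F_A : V → ℝ) (A : V → V →L[ℝ] ℝ)
    (hA_pot : ∀ u v : V, HasLineDerivAt ℝ F_A (A u v) u v) (y z : V) (t₀ : ℝ) :
    HasDerivAt (fun t : ℝ => F_A (y + t • z)) (A (y + t₀ • z) z) t₀ := by
  have h1 : HasDerivAt (fun s : ℝ => F_A (y + t₀ • z + s • z)) (A (y + t₀ • z) z) 0 :=
    hA_pot (y + t₀ • z) z
  have h2 := HasDerivAt.comp t₀ (by simpa using h1) ((hasDerivAt_id t₀).sub_const t₀)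
  simp only [sub_self, mul_one] at h2
  have heq : ((fun s : ℝ => F_A (y + t₀ • z + s • z)) ∘ fun t => t - t₀)
      = fun t : ℝ => F_A (y + t • z) := by
    funext t
    simp only [Function.comp_apply]
    congr 1
    rw [sub_smul]
    abel
  have heq' : ((fun s : ℝ => F_A (y + t₀ • z + s • z)) ∘ fun t => id t - t₀)
      = fun t : ℝ => F_A (y + t • z) := heq
  rwa [heq'] at h2

lemma dq_potential_bound (F_A : V → ℝ) (A : V → V →L[ℝ] ℝ) (L_A : ℝ) (hL_A : 0 < L_A)
    (hA_lip : ∀ u v : V, ‖A u - A v‖ ≤ L_A * ‖u - v‖)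
    (hA_pot : ∀ u v : V, HasLineDerivAt ℝ F_A (A u v) u v) (v : V) (y : V) {l : ℝ}
    (hl : 0 < l) : |dq F_A v (y, l) - A y v| ≤ L_A * l * ‖v‖ ^ 2 := by
  set z : V := l • v with hz
  have hφ : ∀ t : ℝ, HasDerivAt (fun t : ℝ => F_A (y + t • z) - t * A y z)
      (A (y + t • z) z - A y z) t := by
    intro t
    exact (hasDerivAt_line F_A A hA_pot y z t).sub
      (by simpa using (hasDerivAt_id t).mul_const (A y z))
  have hbd : ∀ t ∈ Set.Icc (0:ℝ) 1, ‖A (y + t • z) z - A y z‖ ≤ L_A * ‖z‖ ^ 2 := by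
    intro t ht
    have h1 : ‖A (y + t • z) z - A y z‖ = ‖(A (y + t • z) - A y) z‖ := by
      simp [ContinuousLinearMap.sub_apply]
    rw [h1]
    calc ‖(A (y + t • z) - A y) z‖ ≤ ‖A (y + t • z) - A y‖ * ‖z‖ :=
          ContinuousLinearMap.le_opNorm _ _
    _ ≤ L_A * ‖y + t • z - y‖ * ‖z‖ := by
        apply mul_le_mul_of_nonneg_right (hA_lip _ _) (norm_nonneg z)
    _ ≤ L_A * ‖z‖ ^ 2 := by
        rw [add_sub_cancel_left, norm_smul, Real.norm_eq_abs, abs_of_nonneg ht.1]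
        have h3 : t * ‖z‖ ≤ ‖z‖ := by
          nlinarith [norm_nonneg z, ht.2]
        nlinarith [mul_le_mul_of_nonneg_left h3 (mul_nonneg hL_A.le (norm_nonneg z)),
          norm_nonneg z]
  have hmvt := Convex.norm_image_sub_le_of_norm_hasDerivWithin_le
    (f := fun t : ℝ => F_A (y + t • z) - t * A y z)
    (f' := fun t : ℝ => A (y + t • z) z - A y z)
    (fun t ht => (hφ t).hasDerivWithinAt) hbd (convex_Icc 0 1)
    (Set.left_mem_Icc.mpr zero_le_one) (Set.right_mem_Icc.mpr zero_le_one)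
  have hmvt' : |F_A (y + z) - F_A y - A y z| ≤ L_A * ‖z‖ ^ 2 := by
    simp only [one_smul, zero_smul, add_zero, zero_mul, sub_zero, one_mul,
      Real.norm_eq_abs, abs_one, mul_one] at hmvt
    calc |F_A (y + z) - F_A y - A y z| = |F_A (y + z) - A y z - F_A y| := by
          congr 1; ring
    _ ≤ L_A * ‖z‖ ^ 2 := hmvt
  have hAz : (A y) z = l * A y v := by rw [hz, map_smul, smul_eq_mul]
  have hdq : dq F_A v (y, l) - A y v = (F_A (y + z) - F_A y - A y z) / l := by
    rw [dq, hAz]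
    field_simp
    rw [hz]
  rw [hdq, abs_div, abs_of_pos hl, div_le_iff₀ hl]
  calc |F_A (y + z) - F_A y - A y z| ≤ L_A * ‖z‖ ^ 2 := hmvt'
  _ = L_A * l * ‖v‖ ^ 2 * l := by
      rw [hz, norm_smul, Real.norm_eq_abs, abs_of_pos hl]
      ring

lemma tendsto_dq_potential (F_A : V → ℝ) (A : V → V →L[ℝ] ℝ) (L_A : ℝ) (hL_A : 0 < L_A)
    (hA_lip : ∀ u v : V, ‖A u - A v‖ ≤ L_A * ‖u - v‖)
    (hA_pot : ∀ u v : V, HasLineDerivAt ℝ F_A (A u v) u v) (u v : V) :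
    Tendsto (dq F_A v) (FF u) (𝓝 (A u v)) := by
  have hcont : Continuous fun y : V => A y v := by
    have hlip : LipschitzWith ⟨L_A * ‖v‖, by positivity⟩ (fun y : V => A y v) := by
      apply LipschitzWith.of_dist_le_mul
      intro y y'
      rw [Real.dist_eq]
      have : A y v - A y' v = (A y - A y') v := by simp [ContinuousLinearMap.sub_apply]
      calc |A y v - A y' v| = ‖(A y - A y') v‖ := by rw [this, Real.norm_eq_abs]
      _ ≤ ‖A y - A y'‖ * ‖v‖ := ContinuousLinearMap.le_opNorm _ _
      _ ≤ L_A * ‖y - y'‖ * ‖v‖ := mul_le_mul_of_nonneg_right (hA_lip y y') (norm_nonneg v)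
      _ = (L_A * ‖v‖) * dist y y' := by rw [dist_eq_norm]; ring
    exact hlip.continuous
  have h1 : Tendsto (fun p : V × ℝ => A p.1 v) (FF u) (𝓝 (A u v)) :=
    (hcont.tendsto u).comp tendsto_fst
  have h2 : Tendsto (fun p : V × ℝ => dq F_A v p - A p.1 v) (FF u) (𝓝 0) := by
    apply squeeze_zero_norm' (a := fun p : V × ℝ => L_A * p.2 * ‖v‖ ^ 2)
    · filter_upwards [eventually_pos_FF u] with p hp
      rw [Real.norm_eq_abs]
      exact dq_potential_bound F_A A L_A hL_A hA_lip hA_pot v p.1 hp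
    · have : Tendsto (fun p : V × ℝ => p.2) (FF u) (𝓝 (0:ℝ)) :=
        tendsto_snd.mono_right nhdsWithin_le_nhds
      simpa using (this.const_mul L_A).mul_const (‖v‖ ^ 2)
  have := h2.add h1
  simp only [sub_add_cancel, zero_add] at this
  exact this

end potential

set_option maxHeartbeats 2000000 in
theorem stmt12
    {V : Type*} [NormedAddCommGroup V] [NormedSpace ℝ V] [CompleteSpace V]
    {X : Type*} [NormedAddCommGroup X] [NormedSpace ℝ X] [CompleteSpace X]
    (hV_refl : Function.Surjective (NormedSpace.inclusionInDoubleDual ℝ V))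
    (A : V → V →L[ℝ] ℝ) (F_A : V → ℝ) (L_A : ℝ) (hL_A : 0 < L_A)
    (hA_lip : ∀ u v : V, ‖A u - A v‖ ≤ L_A * ‖u - v‖)
    (hA_pot : ∀ u v : V, HasLineDerivAt ℝ F_A (A u v) u v)
    (m_A : ℝ) (hm_A : 0 < m_A)
    (hA_mono : ∀ u v : V, m_A * ‖u - v‖ ^ 2 ≤ (A u - A v) (u - v))
    (J : X → X → ℝ)
    (hJ_lip : ∀ w : X, LocallyLipschitz (J w))
    (c₀ c₁ c₂ : ℝ) (hc₀ : 0 ≤ c₀) (hc₁ : 0 ≤ c₁) (hc₂ : 0 ≤ c₂)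
    (hJ_bdd : ∀ w v : X, ∀ ξ ∈ clarkeSubdiff (J w) v, ‖ξ‖ ≤ c₀ + c₁ * ‖v‖ + c₂ * ‖w‖)
    (m_α m_L : ℝ) (hm_α : 0 ≤ m_α) (hm_L : 0 ≤ m_L)
    (hJ_mono : ∀ w₁ w₂ v₁ v₂ : X,
      clarkeDeriv (J w₁) v₁ (v₂ - v₁) + clarkeDeriv (J w₂) v₂ (v₁ - v₂)
        ≤ m_α * ‖v₁ - v₂‖ ^ 2 + m_L * ‖w₁ - w₂‖ * ‖v₁ - v₂‖)
    (γ : V →L[ℝ] X) (f : V →L[ℝ] ℝ)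
    (hs : (m_α + m_L) * ‖γ‖ ^ 2 < m_A)
 :
    ∃ c : ℝ, 0 < c ∧ ∀ (Vh : Submodule ℝ V), FiniteDimensional ℝ Vh →
      ∀ uh : Vh,
        ((0 : Vh →L[ℝ] ℝ) ∈
          clarkeSubdiff (fun v : Vh => F_A ↑v - f ↑v + J (γ ↑uh) (γ ↑v)) uh) →
        ‖(uh : V)‖ ≤ c * (1 + ‖f‖) ∧ ‖γ (uh : V)‖ ≤ ‖γ‖ * (c * (1 + ‖f‖)) := by
  have hγ0 : (0:ℝ) ≤ ‖γ‖ := norm_nonneg _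
  set δ : ℝ := m_A - (m_α + m_L) * ‖γ‖ ^ 2 with hδ
  have hδpos : 0 < δ := by rw [hδ]; linarith
  set M : ℝ := ‖A 0‖ + c₀ * ‖γ‖ + ‖f‖ with hM
  have hM0 : 0 ≤ M := by positivity
  clear_value δ M
  refine ⟨M / δ + 1, by positivity, fun Vh _ uh h0 => ?_⟩
  set ub : V := (uh : V) with hub
  set w : X := γ ub with hwdef
  clear_value ub
  clear_value w
  -- Step 1 : optimality gives nonnegative directional derivative
  have h1 : (0:ℝ) ≤ clarkeDeriv (fun v : Vh => F_A ↑v - f ↑v + J w (γ ↑v)) uh (-uh) := by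
    simpa using h0 (-uh)
  -- maps
  have hm3 : Tendsto (fun p : ↥Vh × ℝ => ((p.1 : V), p.2)) (FF uh) (FF ub) := by
    rw [hub]
    exact (((continuous_subtype_val).tendsto uh).comp tendsto_fst).prodMk tendsto_snd
  have hm4 : Tendsto (fun p : ↥Vh × ℝ => (γ (p.1 : V), p.2)) (FF uh) (FF w) := by
    rw [hwdef, hub]
    exact (((γ.continuous.comp continuous_subtype_val).tendsto uh).comp tendsto_fst).prodMk
      tendsto_snd
  -- summands
  set a : ↥Vh × ℝ → ℝ := fun p => dq F_A (-ub) ((p.1 : V), p.2) with ha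
  set bF : ↥Vh × ℝ → ℝ := fun p => (f (p.1 : V) - f ((p.1 : V) + p.2 • (-ub))) / p.2 with hbF
  set bJ : ↥Vh × ℝ → ℝ := dq (J w) (γ (-ub)) ∘ (fun p : ↥Vh × ℝ => (γ (p.1 : V), p.2)) with hbJ
  have hdecomp : dq (fun v : Vh => F_A ↑v - f ↑v + J w (γ ↑v)) (-uh)
      = (fun p => a p + bF p) + bJ := by
    funext p
    have hcoe : ((p.1 + p.2 • (-uh) : Vh) : V) = (p.1 : V) + p.2 • (-ub) := by
      rw [hub]
      push_cast
      ring_nf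
    simp only [Pi.add_apply, Function.comp_apply, dq, ha, hbF, hbJ]
    rw [hcoe]
    rw [show γ ((p.1 : V) + p.2 • (-ub)) = γ (p.1 : V) + p.2 • γ (-ub) from by
      rw [map_add, map_smul]]
    rw [← add_div, ← add_div]
    congr 1
    ring
  -- limits for the smooth parts
  have htF : Tendsto a (FF uh) (𝓝 (A ub (-ub))) :=
    (tendsto_dq_potential F_A A L_A hL_A hA_lip hA_pot ub (-ub)).comp hm3
  have htf : Tendsto bF (FF uh) (𝓝 (f ub)) := by
    have hev : (fun _ : ↥Vh × ℝ => f ub) =ᶠ[FF uh] bF := by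
      filter_upwards [eventually_pos_FF (uh : ↥Vh)] with p hp
      rw [hbF]
      simp only
      rw [map_add, map_smul]
      field_simp
      simp only [map_neg, smul_eq_mul]
      ring
    exact Tendsto.congr' hev tendsto_const_nhds
  have htab : Tendsto (fun p => a p + bF p) (FF uh) (𝓝 (A ub (-ub) + f ub)) := htF.add htf
  obtain ⟨⟨c1, c2, c3⟩, hcomp⟩ :=
    limsup_dq_comp_le (J w) (hJ_lip w) uh w (fun p : ↥Vh × ℝ => (γ (p.1 : V), p.2)) hm4 (γ (-ub))
  -- Step 2 : split the derivative
  have step2 : clarkeDeriv (fun v : Vh => F_A ↑v - f ↑v + J w (γ ↑v)) uh (-uh)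
      ≤ A ub (-ub) + f ub + clarkeDeriv (J w) w (γ (-ub)) := by
    rw [clarkeDeriv_eq, hdecomp]
    calc limsup ((fun p => a p + bF p) + bJ) (FF uh)
        ≤ limsup (fun p => a p + bF p) (FF uh) + limsup bJ (FF uh) :=
          limsup_add_le htab.isBoundedUnder_ge htab.isBoundedUnder_le c3 c1
    _ = (A ub (-ub) + f ub) + limsup bJ (FF uh) := by rw [htab.limsup_eq]
    _ ≤ A ub (-ub) + f ub + clarkeDeriv (J w) w (γ (-ub)) := add_le_add le_rfl hcomp
  -- Step 3 : bound the nonsmooth part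
  obtain ⟨ξ, hξ⟩ := clarkeSubdiff_nonempty (J 0) (hJ_lip 0) 0
  have hξn : ‖ξ‖ ≤ c₀ := by
    have := hJ_bdd 0 0 ξ hξ
    simpa using this
  have hlow : -(c₀ * ‖w‖) ≤ clarkeDeriv (J 0) 0 w := by
    have h1' : ξ w ≤ clarkeDeriv (J 0) 0 w := hξ w
    have h2' : |ξ w| ≤ ‖ξ‖ * ‖w‖ := by
      simpa [Real.norm_eq_abs] using ξ.le_opNorm w
    have h3' : ‖ξ‖ * ‖w‖ ≤ c₀ * ‖w‖ := mul_le_mul_of_nonneg_right hξn (norm_nonneg w)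
    have := (abs_le.mp h2').1
    linarith
  have hmono := hJ_mono w 0 w 0
  rw [zero_sub, sub_zero] at hmono
  have hγneg : γ (-ub) = -w := by rw [map_neg, hwdef]
  have hJw : clarkeDeriv (J w) w (γ (-ub)) ≤ m_α * ‖w‖ ^ 2 + m_L * ‖w‖ * ‖w‖ + c₀ * ‖w‖ := by
    rw [hγneg]
    linarith
  -- Step 4 : bound the monotone part
  have hAmono := hA_mono ub 0
  rw [sub_zero] at hAmono
  rw [ContinuousLinearMap.sub_apply] at hAmono
  have hA0 : -(‖A 0‖ * ‖ub‖) ≤ A 0 ub := by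
    have h2' : |A 0 ub| ≤ ‖A 0‖ * ‖ub‖ := by
      simpa [Real.norm_eq_abs] using (A 0).le_opNorm ub
    linarith [(abs_le.mp h2').1]
  have hfu : f ub ≤ ‖f‖ * ‖ub‖ := by
    have h2' : |f ub| ≤ ‖f‖ * ‖ub‖ := by
      simpa [Real.norm_eq_abs] using f.le_opNorm ub
    linarith [(abs_le.mp h2').2]
  have hAneg : A ub (-ub) = -(A ub ub) := by rw [map_neg]
  have hwle : ‖w‖ ≤ ‖γ‖ * ‖ub‖ := by
    rw [hwdef]; exact γ.le_opNorm ub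
  -- assemble
  have hkey : δ * ‖ub‖ ^ 2 ≤ M * ‖ub‖ := by
    have h4 : m_A * ‖ub‖ ^ 2 ≤ A ub ub - A 0 ub := hAmono
    have h5 : (0:ℝ) ≤ -(A ub ub) + f ub + (m_α * ‖w‖ ^ 2 + m_L * ‖w‖ * ‖w‖ + c₀ * ‖w‖) := by
      rw [hAneg] at step2
      linarith
    have hw2 : ‖w‖ ^ 2 ≤ ‖γ‖ ^ 2 * ‖ub‖ ^ 2 := by
      nlinarith [norm_nonneg w, norm_nonneg ub, hwle]
    have hww : ‖w‖ * ‖w‖ ≤ ‖γ‖ ^ 2 * ‖ub‖ ^ 2 := by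
      nlinarith [norm_nonneg w, norm_nonneg ub, hwle]
    have hcw : c₀ * ‖w‖ ≤ c₀ * (‖γ‖ * ‖ub‖) := mul_le_mul_of_nonneg_left hwle hc₀
    rw [hδ, hM]
    nlinarith [norm_nonneg ub, mul_le_mul_of_nonneg_left hw2 hm_α,
      mul_le_mul_of_nonneg_left hww hm_L]
  have key : ‖ub‖ ≤ M / δ := by
    rw [le_div_iff₀ hδpos]
    rcases (norm_nonneg ub).eq_or_lt with h | h
    · rw [← h]; simpa using hM0
    · nlinarith [hkey, h]
  have hbig : ‖ub‖ ≤ (M / δ + 1) * (1 + ‖f‖) := by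
    have h6 : (0:ℝ) ≤ M / δ := div_nonneg hM0 hδpos.le
    nlinarith [norm_nonneg f, key]
  refine ⟨hbig, ?_⟩
  calc ‖w‖ ≤ ‖γ‖ * ‖ub‖ := hwle
  _ ≤ ‖γ‖ * ((M / δ + 1) * (1 + ‖f‖)) := mul_le_mul_of_nonneg_left hbig hγ0
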